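/- arXiv:2010.11023 — 2 statements merged into one kernel-verified Lean document; each statement's English description precedes it below -/
import Mathlib

section
/- Let G = (V, E_G) be the d-dimensional grid graph with side lengths (n₁, …, n_d), and for any two non-adjacent vertices E, F let G' = (V, E_G ∪ {e}) be the grid with the extra edge e = (E,F). Then β(G') ≤ 2d + 2, and moreover β(G') ≥ log(N_Π) / log(N_Σ − d + 1), where N_Σ = n₁ + ⋯ + n_d and N_Π = n₁ ⋯ n_d. -/
/-- A set `R` of vertices resolves the graph `H` if every pair of distinct
vertices is distinguished by some vertex of `R`. -/
def resolves {V : Type*} (H : SimpleGraph V) (R : Set V) : Prop :=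
  ∀ a b : V, a ≠ b → ∃ x ∈ R, H.dist a x ≠ H.dist b x

/-- The metric dimension: the least cardinality of a (finite) resolving set. -/
noncomputable def metricDim {V : Type*} (H : SimpleGraph V) : ℕ :=
  sInf {k | ∃ R : Finset V, R.card = k ∧ resolves H (R : Set V)}

/-- The `d`-dimensional grid graph with side lengths `n 0, …, n (d-1)`: vertices are
tuples `(x 0, …, x (d-1))` with `x i ∈ Fin (n i)` (representing the coordinate
`x i + 1 ∈ {1, …, n i}`), two vertices being adjacent when they differ by exactly 1
in exactly one coordinate, i.e. when their ℓ¹ distance is 1. -/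
def gridGraph {d : ℕ} (n : Fin d → ℕ) : SimpleGraph (∀ i, Fin (n i)) where
  Adj x y := (∑ i, |((x i : ℕ) : ℤ) - ((y i : ℕ) : ℤ)|) = 1
  symm := by
    constructor
    intro x y h
    rw [show (∑ i, |((y i : ℕ) : ℤ) - ((x i : ℕ) : ℤ)|)
        = ∑ i, |((x i : ℕ) : ℤ) - ((y i : ℕ) : ℤ)| from
      Finset.sum_congr rfl fun i _ => abs_sub_comm _ _]
    exact h
  loopless := by constructor; intro x h; simp at h

namespace GridDev

variable {d : ℕ} {n : Fin d → ℕ}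

/-- ℕ-valued ℓ¹ distance. -/
def Ln (u v : ∀ i, Fin (n i)) : ℕ := ∑ i, (((u i : ℕ) : ℤ) - ((v i : ℕ) : ℤ)).natAbs

/-- ℤ-valued ℓ¹ distance. -/
def Lz (u v : ∀ i, Fin (n i)) : ℤ := ∑ i, |((u i : ℕ) : ℤ) - ((v i : ℕ) : ℤ)|

lemma Lz_eq_cast (u v : ∀ i, Fin (n i)) : Lz u v = (Ln u v : ℤ) := by
  unfold Lz Ln
  push_cast
  exact Finset.sum_congr rfl fun i _ => (Int.abs_eq_natAbs _).trans (by push_cast; ring)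

lemma grid_adj_iff (u v : ∀ i, Fin (n i)) : (gridGraph n).Adj u v ↔ Ln u v = 1 := by
  show (∑ i, |((u i : ℕ) : ℤ) - ((v i : ℕ) : ℤ)|) = 1 ↔ _
  rw [show (∑ i, |((u i : ℕ) : ℤ) - ((v i : ℕ) : ℤ)|) = Lz u v from rfl, Lz_eq_cast]
  exact_mod_cast Iff.rfl

lemma Ln_self (u : ∀ i, Fin (n i)) : Ln u u = 0 := by simp [Ln]

lemma Ln_comm (u v : ∀ i, Fin (n i)) : Ln u v = Ln v u :=
  Finset.sum_congr rfl fun i _ => by rw [← Int.natAbs_neg]; ring_nf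

lemma Ln_eq_zero {u v : ∀ i, Fin (n i)} (h : Ln u v = 0) : u = v := by
  funext i
  have := Finset.sum_eq_zero_iff.mp h i (Finset.mem_univ i)
  have : ((u i : ℕ) : ℤ) = ((v i : ℕ) : ℤ) := by omega
  exact Fin.ext (by exact_mod_cast this)

lemma Ln_triangle (u v w : ∀ i, Fin (n i)) : Ln u w ≤ Ln u v + Ln v w := by
  unfold Ln
  rw [← Finset.sum_add_distrib]
  exact Finset.sum_le_sum fun i _ => by
    have := abs_sub_abs_le_abs_sub (((u i : ℕ) : ℤ) - v i) (((w i : ℕ):ℤ) - v i)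
    omega

end GridDev

namespace GridDev

variable {d : ℕ} {n : Fin d → ℕ}

lemma exists_grid_walk (v : ∀ i, Fin (n i)) :
    ∀ (k : ℕ) (u : ∀ i, Fin (n i)), Ln u v = k →
      ∃ p : (gridGraph n).Walk u v, p.length = k := by
  intro k
  induction k with
  | zero =>
    intro u h
    obtain rfl := Ln_eq_zero h
    exact ⟨SimpleGraph.Walk.nil, rfl⟩
  | succ k ih =>
    intro u h
    have hne : ∃ i, (u i : ℕ) ≠ (v i : ℕ) := by
      by_contra hc
      push_neg at hc
      have hz : Ln u v = 0 := Finset.sum_eq_zero fun i _ => by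
        have hci := hc i; omega
      omega
    obtain ⟨i, hi⟩ := hne
    have hvlt : (v i : ℕ) < n i := (v i).isLt
    have hult : (u i : ℕ) < n i := (u i).isLt
    set w : Fin (n i) := if hlt : (u i : ℕ) < (v i : ℕ) then ⟨(u i:ℕ)+1, by omega⟩
      else ⟨(u i:ℕ)-1, by omega⟩ with hw
    have hwval : ((w : ℕ) : ℤ) = if (u i : ℕ) < (v i : ℕ) then ((u i : ℕ) : ℤ) + 1
        else ((u i : ℕ) : ℤ) - 1 := by
      rw [hw]
      by_cases hlt : (u i : ℕ) < (v i : ℕ)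
      · rw [dif_pos hlt, if_pos hlt]; simp
      · rw [dif_neg hlt, if_neg hlt]
        simp only [Fin.val_mk]
        omega
    set u' : ∀ j, Fin (n j) := Function.update u i w with hu'
    have hterm : ∀ j, ((u' j : ℕ) : ℤ) = if j = i then ((w : ℕ) : ℤ) else ((u j : ℕ) : ℤ) := by
      intro j
      by_cases hj : j = i
      · subst hj; simp [hu']
      · rw [if_neg hj, hu', Function.update_of_ne hj]
    have habs : ∀ j, (((u j : ℕ) : ℤ) - ((v j : ℕ) : ℤ)).natAbs
        = (((u' j : ℕ) : ℤ) - ((v j : ℕ) : ℤ)).natAbs + (if j = i then 1 else 0) := by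
      intro j
      by_cases hj : j = i
      · subst hj
        rw [hterm j, if_pos rfl, if_pos rfl, hwval]
        by_cases hlt : (u j : ℕ) < (v j : ℕ)
        · rw [if_pos hlt]; omega
        · rw [if_neg hlt]; omega
      · rw [hterm j, if_neg hj, if_neg hj]; omega
    have hadj : (gridGraph n).Adj u u' := by
      rw [grid_adj_iff]
      unfold Ln
      rw [Finset.sum_eq_single i]
      · rw [hterm i, if_pos rfl, hwval]
        by_cases hlt : (u i : ℕ) < (v i : ℕ)
        · rw [if_pos hlt]; omega
        · rw [if_neg hlt]; omega
      · intro j _ hj; rw [hterm j, if_neg hj]; simp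
      · intro hh; exact absurd (Finset.mem_univ i) hh
    have hstep : Ln u' v = k := by
      have hsum : Ln u v = Ln u' v + 1 := by
        unfold Ln
        calc ∑ j, (((u j : ℕ) : ℤ) - ((v j : ℕ) : ℤ)).natAbs
            = ∑ j, ((((u' j : ℕ) : ℤ) - ((v j : ℕ) : ℤ)).natAbs + (if j = i then 1 else 0)) :=
              Finset.sum_congr rfl fun j _ => habs j
          _ = (∑ j, (((u' j : ℕ) : ℤ) - ((v j : ℕ) : ℤ)).natAbs)
              + ∑ j, (if j = i then 1 else 0) := Finset.sum_add_distrib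
          _ = (∑ j, (((u' j : ℕ) : ℤ) - ((v j : ℕ) : ℤ)).natAbs) + 1 := by simp
      omega
    obtain ⟨p, hp⟩ := ih u' hstep
    exact ⟨SimpleGraph.Walk.cons hadj p, by simp [hp]⟩

end GridDev

namespace GridDev

variable {d : ℕ} {n : Fin d → ℕ}

/-- min of the three candidate route lengths -/
def N3 (E F u v : ∀ i, Fin (n i)) : ℕ :=
  min (Ln u v) (min (Ln u E + 1 + Ln F v) (Ln u F + 1 + Ln E v))

variable {E F : ∀ i, Fin (n i)} {G' : SimpleGraph (∀ i, Fin (n i))}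

lemma G'_adj_iff (hne : E ≠ F)
    (hG' : G' = gridGraph n ⊔ SimpleGraph.fromEdgeSet {s(E, F)}) (a b : ∀ i, Fin (n i)) :
    G'.Adj a b ↔ (gridGraph n).Adj a b ∨ (a = E ∧ b = F) ∨ (a = F ∧ b = E) := by
  subst hG'
  rw [SimpleGraph.sup_adj, SimpleGraph.fromEdgeSet_adj]
  simp only [Set.mem_singleton_iff, Sym2.eq_iff]
  constructor
  · rintro (h | ⟨(⟨rfl, rfl⟩ | ⟨rfl, rfl⟩), hab⟩)
    · exact Or.inl h
    · exact Or.inr (Or.inl ⟨rfl, rfl⟩)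
    · exact Or.inr (Or.inr ⟨rfl, rfl⟩)
  · rintro (h | ⟨rfl, rfl⟩ | ⟨rfl, rfl⟩)
    · exact Or.inl h
    · exact Or.inr ⟨Or.inl ⟨rfl, rfl⟩, hne⟩
    · exact Or.inr ⟨Or.inr ⟨rfl, rfl⟩, fun hh => hne hh.symm⟩

lemma grid_le (hG' : G' = gridGraph n ⊔ SimpleGraph.fromEdgeSet {s(E, F)}) :
    gridGraph n ≤ G' := hG' ▸ le_sup_left

/-- a G'-walk of any given ℓ¹-realizing grid walk -/
lemma exists_G'_walk (hG' : G' = gridGraph n ⊔ SimpleGraph.fromEdgeSet {s(E, F)})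
    (u v : ∀ i, Fin (n i)) : ∃ p : G'.Walk u v, p.length = Ln u v := by
  obtain ⟨p, hp⟩ := exists_grid_walk v (Ln u v) u rfl
  exact ⟨p.mapLe (grid_le hG'), by rw [SimpleGraph.Walk.mapLe, SimpleGraph.Walk.length_map, hp]⟩

lemma dist_le_N3 (hne : E ≠ F)
    (hG' : G' = gridGraph n ⊔ SimpleGraph.fromEdgeSet {s(E, F)}) (u v : ∀ i, Fin (n i)) :
    G'.dist u v ≤ N3 E F u v := by
  have hEF : G'.Adj E F := by
    rw [G'_adj_iff hne hG']; exact Or.inr (Or.inl ⟨rfl, rfl⟩)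
  have hFE : G'.Adj F E := hEF.symm
  obtain ⟨p1, hp1⟩ := exists_G'_walk hG' u v
  obtain ⟨p2a, hp2a⟩ := exists_G'_walk hG' u E
  obtain ⟨p2b, hp2b⟩ := exists_G'_walk hG' F v
  obtain ⟨p3a, hp3a⟩ := exists_G'_walk hG' u F
  obtain ⟨p3b, hp3b⟩ := exists_G'_walk hG' E v
  have h1 : G'.dist u v ≤ Ln u v := hp1 ▸ SimpleGraph.dist_le p1
  have h2 : G'.dist u v ≤ Ln u E + 1 + Ln F v := by
    have := SimpleGraph.dist_le (p2a.append (SimpleGraph.Walk.cons hEF p2b))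
    rw [SimpleGraph.Walk.length_append, SimpleGraph.Walk.length_cons, hp2a, hp2b] at this
    omega
  have h3 : G'.dist u v ≤ Ln u F + 1 + Ln E v := by
    have := SimpleGraph.dist_le (p3a.append (SimpleGraph.Walk.cons hFE p3b))
    rw [SimpleGraph.Walk.length_append, SimpleGraph.Walk.length_cons, hp3a, hp3b] at this
    omega
  unfold N3
  omega

lemma N3_le_walk (hne : E ≠ F)
    (hG' : G' = gridGraph n ⊔ SimpleGraph.fromEdgeSet {s(E, F)}) (v : ∀ i, Fin (n i)) :
    ∀ (u : ∀ i, Fin (n i)) (p : G'.Walk u v), N3 E F u v ≤ p.length := by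
  intro u p
  induction p with
  | nil => simp [N3, Ln_self]
  | @cons a b c hadj p ih =>
    rw [G'_adj_iff hne hG'] at hadj
    rw [SimpleGraph.Walk.length_cons]
    have key : N3 E F a c ≤ N3 E F b c + 1 := by
      rcases hadj with h | ⟨ha, hb⟩ | ⟨ha, hb⟩ <;> [skip; rw [ha, hb]; rw [ha, hb]]
      · rw [grid_adj_iff] at h
        have t1 : Ln a c ≤ Ln a b + Ln b c := Ln_triangle a b c
        have t2 : Ln a E ≤ Ln a b + Ln b E := Ln_triangle a b E
        have t3 : Ln a F ≤ Ln a b + Ln b F := Ln_triangle a b F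
        unfold N3
        omega
      · have hc : Ln E F = Ln F E := Ln_comm E F
        have hE : Ln E E = 0 := Ln_self E
        have hF : Ln F F = 0 := Ln_self F
        unfold N3
        omega
      · have hc : Ln F E = Ln E F := Ln_comm F E
        have hE : Ln E E = 0 := Ln_self E
        have hF : Ln F F = 0 := Ln_self F
        unfold N3
        omega
    omega

lemma dist_eq_N3 (hne : E ≠ F)
    (hG' : G' = gridGraph n ⊔ SimpleGraph.fromEdgeSet {s(E, F)}) (u v : ∀ i, Fin (n i)) :
    G'.dist u v = N3 E F u v := by
  refine le_antisymm (dist_le_N3 hne hG' u v) ?_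
  obtain ⟨q, hq⟩ := exists_G'_walk hG' u v
  obtain ⟨p, hp⟩ := SimpleGraph.Reachable.exists_walk_length_eq_dist ⟨q⟩
  calc N3 E F u v ≤ p.length := N3_le_walk hne hG' v u p
    _ = G'.dist u v := hp

end GridDev

namespace GridDev

variable {d : ℕ} {n : Fin d → ℕ}

def corv (hn : ∀ i, 1 ≤ n i) (b : Bool) (o : Option (Fin d)) : ∀ i, Fin (n i) :=
  fun i => if o = some i then (if b then ⟨0, hn i⟩ else ⟨n i - 1, by have := hn i; omega⟩)
    else (if b then ⟨n i - 1, by have := hn i; omega⟩ else ⟨0, hn i⟩)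

/-- sum of coordinates, in ℤ -/
def sz (u : ∀ i, Fin (n i)) : ℤ := ∑ i, ((u i : ℕ) : ℤ)

def Mz (n : Fin d → ℕ) : ℤ := ∑ i, ((n i : ℤ) - 1)

variable {hn : ∀ i, 1 ≤ n i}

lemma coord_le (u : ∀ i, Fin (n i)) (i : Fin d) : ((u i : ℕ) : ℤ) ≤ (n i : ℤ) - 1 := by
  have := (u i).isLt; omega

lemma coord_nonneg (u : ∀ i, Fin (n i)) (i : Fin d) : (0:ℤ) ≤ ((u i : ℕ) : ℤ) := by positivity

lemma corv_val_false (o : Option (Fin d)) (i : Fin d) :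
    ((corv hn false o i : ℕ) : ℤ) = if o = some i then (n i : ℤ) - 1 else 0 := by
  have h := hn i
  unfold corv
  split <;> simp <;> omega

lemma corv_val_true (o : Option (Fin d)) (i : Fin d) :
    ((corv hn true o i : ℕ) : ℤ) = if o = some i then 0 else (n i : ℤ) - 1 := by
  have h := hn i
  unfold corv
  split <;> simp <;> omega

lemma Lz_cor_false_none (u : ∀ i, Fin (n i)) : Lz u (corv hn false none) = sz u := by
  unfold Lz sz
  refine Finset.sum_congr rfl fun i _ => ?_
  rw [corv_val_false (hn := hn), if_neg (by simp), sub_zero, abs_of_nonneg (coord_nonneg u i)]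

lemma Lz_cor_true_none (u : ∀ i, Fin (n i)) : Lz u (corv hn true none) = Mz n - sz u := by
  unfold Lz sz Mz
  rw [← Finset.sum_sub_distrib]
  refine Finset.sum_congr rfl fun i _ => ?_
  rw [corv_val_true (hn := hn), if_neg (by simp),
    abs_of_nonpos (by have := coord_le u i; omega)]
  ring

lemma Lz_cor_false_some (u : ∀ i, Fin (n i)) (j : Fin d) :
    Lz u (corv hn false (some j)) = sz u + ((n j : ℤ) - 1) - 2 * ((u j : ℕ) : ℤ) := by
  unfold Lz sz
  have key : ∀ i, |((u i : ℕ) : ℤ) - ((corv hn false (some j) i : ℕ) : ℤ)|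
      = ((u i : ℕ) : ℤ) + (if i = j then ((n j : ℤ) - 1) - 2 * ((u j : ℕ) : ℤ) else 0) := by
    intro i
    rw [corv_val_false (hn := hn)]
    by_cases hij : i = j
    · subst hij
      rw [if_pos rfl, if_pos rfl, abs_of_nonpos (by have := coord_le u i; omega)]
      ring
    · rw [if_neg (by simp [Ne.symm hij]), if_neg hij, sub_zero,
        abs_of_nonneg (coord_nonneg u i), add_zero]
  rw [Finset.sum_congr rfl fun i _ => key i, Finset.sum_add_distrib,
    Finset.sum_ite_eq' Finset.univ j]
  simp [add_sub_assoc]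

lemma Lz_cor_true_some (u : ∀ i, Fin (n i)) (j : Fin d) :
    Lz u (corv hn true (some j)) = Mz n - (sz u + ((n j : ℤ) - 1) - 2 * ((u j : ℕ) : ℤ)) := by
  unfold Lz sz Mz
  have key : ∀ i, |((u i : ℕ) : ℤ) - ((corv hn true (some j) i : ℕ) : ℤ)|
      = (((n i : ℤ) - 1) - ((u i : ℕ) : ℤ)) + (if i = j then 2 * ((u j : ℕ) : ℤ) - ((n j : ℤ) - 1) else 0) := by
    intro i
    rw [corv_val_true (hn := hn)]
    by_cases hij : i = j
    · subst hij
      rw [if_pos rfl, if_pos rfl, sub_zero, abs_of_nonneg (coord_nonneg u i)]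
      ring
    · rw [if_neg (by simp [Ne.symm hij]), if_neg hij,
        abs_of_nonpos (by have := coord_le u i; omega), add_zero]
      ring
  rw [Finset.sum_congr rfl fun i _ => key i, Finset.sum_add_distrib,
    Finset.sum_ite_eq' Finset.univ j, Finset.sum_sub_distrib]
  simp only [Finset.mem_univ, if_pos]
  ring

lemma sz_tri (u w : ∀ i, Fin (n i)) : |sz u - sz w| ≤ Lz u w := by
  unfold sz Lz
  rw [← Finset.sum_sub_distrib]
  exact Finset.abs_sum_le_sum_abs _ _

lemma sz_tri_slice (u w : ∀ i, Fin (n i)) (j : Fin d) :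
    |(sz u - 2 * ((u j : ℕ) : ℤ)) - (sz w - 2 * ((w j : ℕ) : ℤ))| ≤ Lz u w := by
  set g : Fin d → ℤ := fun i => ((u i : ℕ) : ℤ) - ((w i : ℕ) : ℤ) with hg
  have hsplit : ∑ i, g i = (∑ i ∈ Finset.univ.erase j, g i) + g j :=
    (Finset.sum_erase_add _ _ (Finset.mem_univ j)).symm
  have hsplit2 : ∑ i, |g i| = (∑ i ∈ Finset.univ.erase j, |g i|) + |g j| :=
    (Finset.sum_erase_add _ _ (Finset.mem_univ j)).symm
  have hsum : sz u - sz w = ∑ i, g i := by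
    unfold sz; rw [← Finset.sum_sub_distrib]
  have hL : Lz u w = ∑ i, |g i| := rfl
  have key : (sz u - 2 * ((u j : ℕ) : ℤ)) - (sz w - 2 * ((w j : ℕ) : ℤ))
      = (∑ i ∈ Finset.univ.erase j, g i) - g j := by
    have hgj : g j = ((u j : ℕ) : ℤ) - ((w j : ℕ) : ℤ) := rfl
    omega
  rw [key, hL, hsplit2]
  have h1 := abs_sub (∑ i ∈ Finset.univ.erase j, g i) (g j)
  have h2 : |∑ i ∈ Finset.univ.erase j, g i| ≤ ∑ i ∈ Finset.univ.erase j, |g i| :=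
    Finset.abs_sum_le_sum_abs _ _
  omega

end GridDev

namespace GridDev

variable {d : ℕ} {n : Fin d → ℕ}
variable {E F : ∀ i, Fin (n i)} {G' : SimpleGraph (∀ i, Fin (n i))}

lemma Lz_nonneg (u v : ∀ i, Fin (n i)) : 0 ≤ Lz u v := by
  rw [Lz_eq_cast]; positivity

lemma Mz_nonneg (hn : ∀ i, 1 ≤ n i) : 0 ≤ Mz n := by
  unfold Mz
  exact Finset.sum_nonneg fun i _ => by have := hn i; omega

lemma corner_resolve (hn : ∀ i, 1 ≤ n i) (hne : E ≠ F)
    (hG' : G' = gridGraph n ⊔ SimpleGraph.fromEdgeSet {s(E, F)}) (a b : ∀ i, Fin (n i))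
    (hall : ∀ (bo : Bool) (o : Option (Fin d)),
      G'.dist a (corv hn bo o) = G'.dist b (corv hn bo o)) : a = b := by
  have zeq : ∀ (bo : Bool) (o : Option (Fin d)),
      min (Lz a (corv hn bo o))
        (min (Lz a E + 1 + Lz F (corv hn bo o)) (Lz a F + 1 + Lz E (corv hn bo o)))
      = min (Lz b (corv hn bo o))
        (min (Lz b E + 1 + Lz F (corv hn bo o)) (Lz b F + 1 + Lz E (corv hn bo o))) := by
    intro bo o
    have h := hall bo o
    rw [dist_eq_N3 hne hG', dist_eq_N3 hne hG'] at h
    have h' := congrArg (Nat.cast : ℕ → ℤ) h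
    simp only [N3, Nat.cast_min, Nat.cast_add, Nat.cast_one, ← Lz_eq_cast] at h'
    exact h'
  have hMz : (0:ℤ) ≤ Mz n := Mz_nonneg hn
  have hnnaE : (0:ℤ) ≤ Lz a E := Lz_nonneg a E
  have hnnaF : (0:ℤ) ≤ Lz a F := Lz_nonneg a F
  have hnnbE : (0:ℤ) ≤ Lz b E := Lz_nonneg b E
  have hnnbF : (0:ℤ) ≤ Lz b F := Lz_nonneg b F
  -- sum equality from the two "none" corners
  have h0 := zeq false none
  have h0' := zeq true none
  rw [Lz_cor_false_none a, Lz_cor_false_none b, Lz_cor_false_none E, Lz_cor_false_none F] at h0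
  rw [Lz_cor_true_none a, Lz_cor_true_none b, Lz_cor_true_none E, Lz_cor_true_none F] at h0'
  have t1 := abs_le.mp (sz_tri a E)
  have t2 := abs_le.mp (sz_tri a F)
  have t3 := abs_le.mp (sz_tri b E)
  have t4 := abs_le.mp (sz_tri b F)
  have hs : sz a = sz b := by omega
  -- coordinates
  have hcoord : ∀ j, ((a j : ℕ) : ℤ) = ((b j : ℕ) : ℤ) := by
    intro j
    have h1 := zeq false (some j)
    have h2 := zeq true (some j)
    rw [Lz_cor_false_some a, Lz_cor_false_some b, Lz_cor_false_some E, Lz_cor_false_some F] at h1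
    rw [Lz_cor_true_some a, Lz_cor_true_some b, Lz_cor_true_some E, Lz_cor_true_some F] at h2
    have s1 := abs_le.mp (sz_tri_slice a E j)
    have s2 := abs_le.mp (sz_tri_slice a F j)
    have s3 := abs_le.mp (sz_tri_slice b E j)
    have s4 := abs_le.mp (sz_tri_slice b F j)
    have hm : (0:ℤ) ≤ (n j : ℤ) - 1 := by have := hn j; omega
    omega
  funext j
  exact Fin.ext (by exact_mod_cast hcoord j)

def cornerSet (hn : ∀ i, 1 ≤ n i) : Finset (∀ i, Fin (n i)) :=
  Finset.image (fun p : Bool × Option (Fin d) => corv hn p.1 p.2) Finset.univ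

lemma cornerSet_card (hn : ∀ i, 1 ≤ n i) : (cornerSet hn).card ≤ 2 * d + 2 := by
  refine le_trans Finset.card_image_le ?_
  simp only [Finset.card_univ, Fintype.card_prod, Fintype.card_bool, Fintype.card_option,
    Fintype.card_fin]
  omega

lemma cornerSet_resolves (hn : ∀ i, 1 ≤ n i) (hne : E ≠ F)
    (hG' : G' = gridGraph n ⊔ SimpleGraph.fromEdgeSet {s(E, F)}) :
    resolves G' ((cornerSet hn : Finset (∀ i, Fin (n i))) : Set (∀ i, Fin (n i))) := by
  intro a b hab
  by_contra h
  push_neg at h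
  refine hab (corner_resolve hn hne hG' a b fun bo o => ?_)
  exact h _ (Finset.mem_coe.mpr (Finset.mem_image_of_mem _ (Finset.mem_univ (bo, o))))

lemma metricDim_le (hn : ∀ i, 1 ≤ n i) (hne : E ≠ F)
    (hG' : G' = gridGraph n ⊔ SimpleGraph.fromEdgeSet {s(E, F)}) :
    metricDim G' ≤ 2 * d + 2 := by
  refine le_trans (Nat.sInf_le ?_) (cornerSet_card hn)
  exact ⟨cornerSet hn, rfl, cornerSet_resolves hn hne hG'⟩

end GridDev

namespace GridDev

variable {d : ℕ} {n : Fin d → ℕ}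
variable {E F : ∀ i, Fin (n i)} {G' : SimpleGraph (∀ i, Fin (n i))}

/-- diameter bound -/
def Dm (n : Fin d → ℕ) : ℕ := ∑ i, (n i - 1)

lemma Ln_le_Dm (u v : ∀ i, Fin (n i)) : Ln u v ≤ Dm n := by
  unfold Ln Dm
  refine Finset.sum_le_sum fun i _ => ?_
  have h1 := (u i).isLt
  have h2 := (v i).isLt
  omega

lemma dist_le_Dm (hne : E ≠ F)
    (hG' : G' = gridGraph n ⊔ SimpleGraph.fromEdgeSet {s(E, F)}) (u v : ∀ i, Fin (n i)) :
    G'.dist u v ≤ Dm n := by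
  have h := dist_le_N3 hne hG' u v
  have h2 : N3 E F u v ≤ Ln u v := min_le_left _ _
  have h3 := Ln_le_Dm u v
  omega

lemma prod_le_pow (hn : ∀ i, 1 ≤ n i) (hne : E ≠ F)
    (hG' : G' = gridGraph n ⊔ SimpleGraph.fromEdgeSet {s(E, F)}) :
    (∏ i, n i) ≤ (Dm n + 1) ^ (metricDim G') := by
  have hmem : metricDim G' ∈ {k | ∃ R : Finset (∀ i, Fin (n i)), R.card = k ∧ resolves G' (R : Set _)} :=
    Nat.sInf_mem ⟨(cornerSet hn).card, cornerSet hn, rfl, cornerSet_resolves hn hne hG'⟩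
  obtain ⟨R, hcard, hres⟩ := hmem
  classical
  set f : (∀ i, Fin (n i)) → ((x : R) → Fin (Dm n + 1)) :=
    fun v x => ⟨G'.dist v x.1, Nat.lt_succ_of_le (dist_le_Dm hne hG' v x.1)⟩ with hf
  have hinj : Function.Injective f := by
    intro u v h
    by_contra hne2
    obtain ⟨x, hxR, hx⟩ := hres u v hne2
    apply hx
    have := congrFun h ⟨x, Finset.mem_coe.mp hxR⟩
    simpa [hf, Fin.mk.injEq] using this
  have hcardle := Fintype.card_le_of_injective f hinj
  rw [Fintype.card_pi] at hcardle
  simp only [Fintype.card_fin] at hcardle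
  rw [Fintype.card_fun, Fintype.card_fin, Fintype.card_coe, hcard] at hcardle
  exact hcardle

end GridDev

/-- Theorem 3: for the `d`-dimensional grid `G` with an extra edge `e = (E,F)` added
between two non-adjacent vertices, `β(G') ≤ 2d + 2`; moreover the lower bound
`β(G') ≥ log(N_Π) / log(N_Σ − d + 1)` still holds. -/
theorem stmt_11 {d : ℕ} (n : Fin d → ℕ) (hn : ∀ i, 1 ≤ n i)
    (E F : ∀ i, Fin (n i)) (hne : E ≠ F) (hadj : ¬ (gridGraph n).Adj E F)
    (G' : SimpleGraph (∀ i, Fin (n i)))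
    (hG' : G' = gridGraph n ⊔ SimpleGraph.fromEdgeSet {s(E, F)}) :
    metricDim G' ≤ 2 * d + 2 ∧
    Real.log (∏ i, (n i : ℝ)) / Real.log ((∑ i, (n i : ℝ)) - d + 1) ≤
      (metricDim G' : ℝ) := by
  constructor
  · exact GridDev.metricDim_le hn hne hG'
  · have hpow := GridDev.prod_le_pow hn hne hG'
    set k := metricDim G' with hk
    -- Dm ≥ 1
    have hDm : 1 ≤ GridDev.Dm n := by
      obtain ⟨i, hi⟩ : ∃ i, E i ≠ F i := by
        by_contra hc
        push_neg at hc
        exact hne (funext hc)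
      have h2 : 2 ≤ n i := by
        have h1 := (E i).isLt
        have h2 := (F i).isLt
        have : (E i : ℕ) ≠ (F i : ℕ) := fun hh => hi (Fin.ext hh)
        omega
      calc 1 ≤ n i - 1 := by omega
        _ ≤ GridDev.Dm n :=
          Finset.single_le_sum (f := fun j => n j - 1) (fun j _ => Nat.zero_le _)
            (Finset.mem_univ i)
    -- cast identity
    have hBcast : ((GridDev.Dm n + 1 : ℕ) : ℝ) = (∑ i, (n i : ℝ)) - d + 1 := by
      unfold GridDev.Dm
      push_cast
      rw [show (∑ i, ((n i - 1 : ℕ) : ℝ)) = ∑ i, ((n i : ℝ) - 1) from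
        Finset.sum_congr rfl fun i _ => by
          have := hn i
          push_cast [Nat.cast_sub (hn i)]
          ring]
      rw [Finset.sum_sub_distrib]
      simp
    have hlogB : 0 < Real.log ((GridDev.Dm n + 1 : ℕ) : ℝ) := by
      apply Real.log_pos
      exact_mod_cast by omega
    have hprodpos : (0:ℝ) < ∏ i, (n i : ℝ) :=
      Finset.prod_pos fun i _ => by exact_mod_cast hn i
    have hle : (∏ i, (n i : ℝ)) ≤ ((GridDev.Dm n + 1 : ℕ) : ℝ) ^ k := by
      exact_mod_cast hpow
    have hlog : Real.log (∏ i, (n i : ℝ)) ≤ k * Real.log ((GridDev.Dm n + 1 : ℕ) : ℝ) := by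
      calc Real.log (∏ i, (n i : ℝ)) ≤ Real.log (((GridDev.Dm n + 1 : ℕ) : ℝ) ^ k) :=
            Real.log_le_log hprodpos hle
        _ = k * Real.log ((GridDev.Dm n + 1 : ℕ) : ℝ) := Real.log_pow _ _
    rw [← hBcast, div_le_iff₀ hlogB]
    exact hlog
end

section
/- Let G be the m×n rectangle grid graph and let G' be G with an extra edge e between E = (x_E, y_E) and F = (x_F, y_F) satisfying: d_G(E,F) ≥ 2; x_F ≤ x_E, y_E ≤ y_F, x_E − x_F ≤ y_F − y_E; x_F ≠ x_E; Gain' ≥ 2; and neither E nor F lies on the boundary of the grid. If Gain' is even and x_E − x_F < Gain'/2 + 2, then the set {X = (1, β − 1), Y = (n, β − 1), Z = (1, α − 1)} is a resolving set of G', where α = (1 + y_F + y_E + x_F − x_E)/2 and β = (1 + y_F + y_E + x_E − x_F)/2. -/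
/-- The rectangle grid graph with `n` columns and `m` rows: the vertex `(i, j)`
(with `i : Fin n`, `j : Fin m`) represents the grid point in column `i + 1` and row
`j + 1`; two vertices are adjacent when they differ by exactly 1 in exactly one
coordinate, i.e. when their ℓ¹ distance is 1. -/
def grid2 (n m : ℕ) : SimpleGraph (Fin n × Fin m) where
  Adj a b := |((a.1 : ℕ) : ℤ) - ((b.1 : ℕ) : ℤ)| + |((a.2 : ℕ) : ℤ) - ((b.2 : ℕ) : ℤ)| = 1
  symm := by
    constructor
    intro a b h
    beta_reduce at h ⊢
    rw [abs_sub_comm ((b.1 : ℕ) : ℤ), abs_sub_comm ((b.2 : ℕ) : ℤ)]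
    exact h
  loopless := by constructor; intro a h; simp at h

/-- The (1-indexed) column coordinate of a grid vertex, as a rational number. -/
def Xc {n m : ℕ} (v : Fin n × Fin m) : ℚ := ((v.1 : ℕ) : ℚ) + 1

/-- The (1-indexed) row coordinate of a grid vertex, as a rational number. -/
def Yc {n m : ℕ} (v : Fin n × Fin m) : ℚ := ((v.2 : ℕ) : ℚ) + 1

/-- `v` lies on the boundary of the grid. -/
def onBoundary {n m : ℕ} (v : Fin n × Fin m) : Prop :=
  (v.1 : ℕ) = 0 ∨ (v.1 : ℕ) = n - 1 ∨ (v.2 : ℕ) = 0 ∨ (v.2 : ℕ) = m - 1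

namespace StmtAux
variable {n m : ℕ}

/-- ℓ¹ distance as a natural number. -/
def Dg (a b : Fin n × Fin m) : ℕ :=
  (((a.1 : ℕ) : ℤ) - ((b.1 : ℕ) : ℤ)).natAbs + (((a.2 : ℕ) : ℤ) - ((b.2 : ℕ) : ℤ)).natAbs

lemma grid2_adj_iff (a b : Fin n × Fin m) : (grid2 n m).Adj a b ↔ Dg a b = 1 := by
  show (|((a.1 : ℕ) : ℤ) - ((b.1 : ℕ) : ℤ)| + |((a.2 : ℕ) : ℤ) - ((b.2 : ℕ) : ℤ)| = 1) ↔ _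
  unfold Dg
  rw [Int.abs_eq_natAbs, Int.abs_eq_natAbs]
  omega

lemma exists_walk_grid : ∀ (k : ℕ) (a b : Fin n × Fin m), Dg a b = k →
    ∃ w : (grid2 n m).Walk a b, w.length = k := by
  intro k
  induction k with
  | zero =>
    intro a b h
    have : a = b := by
      unfold Dg at h
      have h1 : (a.1 : ℕ) = (b.1 : ℕ) := by omega
      have h2 : (a.2 : ℕ) = (b.2 : ℕ) := by omega
      exact Prod.ext (Fin.ext h1) (Fin.ext h2)
    subst this
    exact ⟨SimpleGraph.Walk.nil, rfl⟩
  | succ k ih =>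
    intro a b h
    by_cases hx : (a.1 : ℕ) = (b.1 : ℕ)
    · -- move second coordinate
      have hy : (a.2 : ℕ) ≠ (b.2 : ℕ) := by unfold Dg at h; omega
      rcases Nat.lt_or_ge (a.2 : ℕ) (b.2 : ℕ) with hcc | hcc
      · have hlt : (a.2 : ℕ) + 1 < m := lt_of_le_of_lt hcc b.2.isLt
        set c : Fin n × Fin m := (a.1, ⟨(a.2 : ℕ) + 1, hlt⟩) with hc
        have hadj : (grid2 n m).Adj a c := by rw [grid2_adj_iff]; unfold Dg; simp only [hc]; omega
        have hD : Dg c b = k := by unfold Dg at h ⊢; simp only [hc]; omega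
        obtain ⟨w, hw⟩ := ih c b hD
        exact ⟨SimpleGraph.Walk.cons hadj w, by simp [hw]⟩
      · have h0 : 0 < (a.2 : ℕ) := by omega
        have hlt : (a.2 : ℕ) - 1 < m := lt_of_le_of_lt (Nat.sub_le _ _) a.2.isLt
        set c : Fin n × Fin m := (a.1, ⟨(a.2 : ℕ) - 1, hlt⟩) with hc
        have hadj : (grid2 n m).Adj a c := by rw [grid2_adj_iff]; unfold Dg; simp only [hc]; omega
        have hD : Dg c b = k := by unfold Dg at h ⊢; simp only [hc]; omega
        obtain ⟨w, hw⟩ := ih c b hD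
        exact ⟨SimpleGraph.Walk.cons hadj w, by simp [hw]⟩
    · -- move first coordinate
      rcases Nat.lt_or_ge (a.1 : ℕ) (b.1 : ℕ) with hcc | hcc
      · have hlt : (a.1 : ℕ) + 1 < n := lt_of_le_of_lt hcc b.1.isLt
        set c : Fin n × Fin m := (⟨(a.1 : ℕ) + 1, hlt⟩, a.2) with hc
        have hadj : (grid2 n m).Adj a c := by rw [grid2_adj_iff]; unfold Dg; simp only [hc]; omega
        have hD : Dg c b = k := by unfold Dg at h ⊢; simp only [hc]; omega
        obtain ⟨w, hw⟩ := ih c b hD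
        exact ⟨SimpleGraph.Walk.cons hadj w, by simp [hw]⟩
      · have h0 : 0 < (a.1 : ℕ) := by omega
        have hlt : (a.1 : ℕ) - 1 < n := lt_of_le_of_lt (Nat.sub_le _ _) a.1.isLt
        set c : Fin n × Fin m := (⟨(a.1 : ℕ) - 1, hlt⟩, a.2) with hc
        have hadj : (grid2 n m).Adj a c := by rw [grid2_adj_iff]; unfold Dg; simp only [hc]; omega
        have hD : Dg c b = k := by unfold Dg at h ⊢; simp only [hc]; omega
        obtain ⟨w, hw⟩ := ih c b hD
        exact ⟨SimpleGraph.Walk.cons hadj w, by simp [hw]⟩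

lemma walk_lower : ∀ {a b : Fin n × Fin m} (w : (grid2 n m).Walk a b),
    Dg a b ≤ w.length := by
  intro a b w
  induction w with
  | nil => unfold Dg; omega
  | @cons u v w' h p ih =>
    rw [grid2_adj_iff] at h
    have tri : Dg u w' ≤ Dg u v + Dg v w' := by unfold Dg; omega
    simp only [SimpleGraph.Walk.length_cons]
    omega

lemma grid_dist (a b : Fin n × Fin m) : (grid2 n m).dist a b = Dg a b := by
  obtain ⟨w, hw⟩ := exists_walk_grid (Dg a b) a b rfl
  refine le_antisymm (hw ▸ SimpleGraph.dist_le w) ?_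
  have hr : (grid2 n m).Reachable a b := ⟨w⟩
  obtain ⟨p, hp⟩ := hr.exists_walk_length_eq_dist
  exact hp ▸ walk_lower p

variable (E F : Fin n × Fin m)

/-- The claimed distance in `G' = grid2 ⊔ {EF}`. -/
def D3 (a b : Fin n × Fin m) : ℕ :=
  min (Dg a b) (min (Dg a E + 1 + Dg F b) (Dg a F + 1 + Dg E b))

lemma Dg_comm (a b : Fin n × Fin m) : Dg a b = Dg b a := by unfold Dg; omega

lemma Dg_tri (a c b : Fin n × Fin m) : Dg a b ≤ Dg a c + Dg c b := by unfold Dg; omega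

lemma Dg_self (a : Fin n × Fin m) : Dg a a = 0 := by unfold Dg; omega

variable {G' : SimpleGraph (Fin n × Fin m)}
  (hG' : G' = grid2 n m ⊔ SimpleGraph.fromEdgeSet {s(E, F)}) (hEF : E ≠ F)

include hG' hEF in
lemma G'_adj_cases {a c : Fin n × Fin m} (h : G'.Adj a c) :
    (grid2 n m).Adj a c ∨ (a = E ∧ c = F) ∨ (a = F ∧ c = E) := by
  rw [hG'] at h
  rcases h with h | h
  · exact Or.inl h
  · rw [SimpleGraph.fromEdgeSet_adj, Set.mem_singleton_iff, Sym2.eq_iff] at h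
    tauto

include hG' hEF in
lemma G'_walk_lower : ∀ {a b : Fin n × Fin m} (w : G'.Walk a b),
    D3 E F a b ≤ w.length := by
  intro a b w
  induction w with
  | nil => unfold D3; rw [Dg_self]; omega
  | @cons u v w' h p ih =>
    simp only [SimpleGraph.Walk.length_cons]
    have step : D3 E F u w' ≤ D3 E F v w' + 1 := by
      rcases G'_adj_cases E F hG' hEF h with hg | ⟨h1, h2⟩ | ⟨h1, h2⟩
      · rw [grid2_adj_iff] at hg
        have t1 : Dg u w' ≤ Dg v w' + 1 := by have := Dg_tri u v w'; omega
        have t2 : Dg u E ≤ Dg v E + 1 := by have := Dg_tri u v E; omega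
        have t3 : Dg u F ≤ Dg v F + 1 := by have := Dg_tri u v F; omega
        unfold D3; omega
      · rw [h1, h2]
        unfold D3
        rw [Dg_self, Dg_comm E F]
        omega
      · rw [h1, h2]
        unfold D3
        rw [Dg_self, Dg_comm F E]
        omega
    omega

include hG' hEF in
lemma G'_dist (a b : Fin n × Fin m) : G'.dist a b = D3 E F a b := by
  have hle : grid2 n m ≤ G' := hG' ▸ le_sup_left
  have hadjEF : G'.Adj E F := by
    rw [hG']
    exact Or.inr (by rw [SimpleGraph.fromEdgeSet_adj]; exact ⟨rfl, hEF⟩)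
  obtain ⟨w1, hw1⟩ := exists_walk_grid (Dg a b) a b rfl
  obtain ⟨w2, hw2⟩ := exists_walk_grid (Dg a E) a E rfl
  obtain ⟨w3, hw3⟩ := exists_walk_grid (Dg F b) F b rfl
  obtain ⟨w4, hw4⟩ := exists_walk_grid (Dg a F) a F rfl
  obtain ⟨w5, hw5⟩ := exists_walk_grid (Dg E b) E b rfl
  refine le_antisymm ?_ ?_
  · unfold D3
    refine le_min ?_ (le_min ?_ ?_)
    · have := SimpleGraph.dist_le (w1.mapLe hle)
      simp only [SimpleGraph.Walk.mapLe, SimpleGraph.Walk.length_map] at this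
      omega
    · have := SimpleGraph.dist_le (((w2.mapLe hle).append
        (SimpleGraph.Walk.cons hadjEF (w3.mapLe hle))))
      simp only [SimpleGraph.Walk.length_append, SimpleGraph.Walk.length_cons,
        SimpleGraph.Walk.mapLe, SimpleGraph.Walk.length_map] at this
      omega
    · have := SimpleGraph.dist_le (((w4.mapLe hle).append
        (SimpleGraph.Walk.cons hadjEF.symm (w5.mapLe hle))))
      simp only [SimpleGraph.Walk.length_append, SimpleGraph.Walk.length_cons,
        SimpleGraph.Walk.mapLe, SimpleGraph.Walk.length_map] at this
      omega
  · have hr : G'.Reachable a b := ⟨w1.mapLe hle⟩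
    obtain ⟨p, hp⟩ := hr.exists_walk_length_eq_dist
    exact hp ▸ G'_walk_lower E F hG' hEF p


lemma D3_cast {n m : ℕ} (E F a b : Fin n × Fin m) : ((D3 E F a b : ℕ) : ℤ) =
    min (|((a.1:ℕ):ℤ) - ((b.1:ℕ):ℤ)| + |((a.2:ℕ):ℤ) - ((b.2:ℕ):ℤ)|)
      (min ((|((a.1:ℕ):ℤ) - ((E.1:ℕ):ℤ)| + |((a.2:ℕ):ℤ) - ((E.2:ℕ):ℤ)|) + 1 +
              (|((F.1:ℕ):ℤ) - ((b.1:ℕ):ℤ)| + |((F.2:ℕ):ℤ) - ((b.2:ℕ):ℤ)|))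
           ((|((a.1:ℕ):ℤ) - ((F.1:ℕ):ℤ)| + |((a.2:ℕ):ℤ) - ((F.2:ℕ):ℤ)|) + 1 +
              (|((E.1:ℕ):ℤ) - ((b.1:ℕ):ℤ)| + |((E.2:ℕ):ℤ) - ((b.2:ℕ):ℤ)|))) := by
  unfold D3 Dg
  push_cast [Int.natCast_natAbs]
  rfl



end StmtAux

namespace StmtAux2

lemma redX (nn pE qE pF qF b2 p q : ℤ)
    (hpEF : pF < pE) (hqEF : qE ≤ qF)
    (hg : 2 ≤ qF - qE - (pE - pF) - 1)
    (hb2 : 2*b2 = qF + qE + pE - pF - 1)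
    (hp : 0 ≤ p) (hpF : 0 ≤ pF) (hpE : 0 ≤ pE) :
    min (|p - 0| + |q - b2|)
      (min ((|p - pE| + |q - qE|) + 1 + (|pF - 0| + |qF - b2|))
           ((|p - pF| + |q - qF|) + 1 + (|pE - 0| + |qE - b2|)))
    = min (p + |q - b2|) ((|p - pE| + |q - qE|) + 1 + (pF + (qF - b2))) := by
  have h1 : |p - (0:ℤ)| = p := by rw [sub_zero]; exact abs_of_nonneg hp
  have h2 : |pF - (0:ℤ)| = pF := by rw [sub_zero]; exact abs_of_nonneg hpF
  have h3 : |pE - (0:ℤ)| = pE := by rw [sub_zero]; exact abs_of_nonneg hpE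
  have h4 : |qF - b2| = qF - b2 := abs_of_nonneg (by omega)
  have h5 : |qE - b2| = b2 - qE := by rw [abs_sub_comm]; exact abs_of_nonneg (by omega)
  rw [h1, h2, h3, h4, h5]
  have hC : p + |q - b2| ≤ (|p - pF| + |q - qF|) + 1 + (pE + (b2 - qE)) := by
    have t1 := abs_sub_le q qF b2
    rw [h4] at t1
    have t2 := neg_abs_le (p - pF)
    have t3 := le_abs_self (p - pF)
    have t4 := abs_nonneg (q - qF)
    omega
  rw [min_comm ((|p - pE| + |q - qE|) + 1 + (pF + (qF - b2))) _, ← min_assoc, min_eq_left hC]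

lemma redY (nn pE qE pF qF b2 p q : ℤ)
    (hpEF : pF < pE) (hqEF : qE ≤ qF)
    (hg : 2 ≤ qF - qE - (pE - pF) - 1)
    (hb2 : 2*b2 = qF + qE + pE - pF - 1)
    (hp : p ≤ nn - 1) (hpF : pF ≤ nn - 1) (hpE : pE ≤ nn - 1) :
    min (|p - (nn - 1)| + |q - b2|)
      (min ((|p - pE| + |q - qE|) + 1 + (|pF - (nn - 1)| + |qF - b2|))
           ((|p - pF| + |q - qF|) + 1 + (|pE - (nn - 1)| + |qE - b2|)))
    = (nn - 1 - p) + |q - b2| := by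
  have h1 : |p - (nn - 1)| = nn - 1 - p := by rw [abs_sub_comm]; exact abs_of_nonneg (by omega)
  have h2 : |pF - (nn - 1)| = nn - 1 - pF := by rw [abs_sub_comm]; exact abs_of_nonneg (by omega)
  have h3 : |pE - (nn - 1)| = nn - 1 - pE := by rw [abs_sub_comm]; exact abs_of_nonneg (by omega)
  have h4 : |qF - b2| = qF - b2 := abs_of_nonneg (by omega)
  have h5 : |qE - b2| = b2 - qE := by rw [abs_sub_comm]; exact abs_of_nonneg (by omega)
  rw [h1, h2, h3, h4, h5]
  have hAB : (nn - 1 - p) + |q - b2| ≤ (|p - pE| + |q - qE|) + 1 + ((nn - 1 - pF) + (qF - b2)) := by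
    have t1 := abs_sub_le q qE b2
    rw [h5] at t1
    have t2 := neg_abs_le (p - pE)
    have t3 := le_abs_self (p - pE)
    have t4 := abs_nonneg (q - qE)
    omega
  have hAC : (nn - 1 - p) + |q - b2| ≤ (|p - pF| + |q - qF|) + 1 + ((nn - 1 - pE) + (b2 - qE)) := by
    have t1 := abs_sub_le q qF b2
    rw [h4] at t1
    have t2 := neg_abs_le (p - pF)
    have t3 := le_abs_self (p - pF)
    have t4 := abs_nonneg (q - qF)
    omega
  exact min_eq_left (le_min hAB hAC)

lemma redZ (nn pE qE pF qF a2 p q : ℤ)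
    (hpEF : pF < pE) (hqEF : qE ≤ qF)
    (hg : 2 ≤ qF - qE - (pE - pF) - 1)
    (ha2 : 2*a2 = qF + qE + pF - pE - 1)
    (hp : 0 ≤ p) (hpF : 0 ≤ pF) (hpE : 0 ≤ pE) :
    min (|p - 0| + |q - a2|)
      (min ((|p - pE| + |q - qE|) + 1 + (|pF - 0| + |qF - a2|))
           ((|p - pF| + |q - qF|) + 1 + (|pE - 0| + |qE - a2|)))
    = p + |q - a2| := by
  have h1 : |p - (0:ℤ)| = p := by rw [sub_zero]; exact abs_of_nonneg hp
  have h2 : |pF - (0:ℤ)| = pF := by rw [sub_zero]; exact abs_of_nonneg hpF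
  have h3 : |pE - (0:ℤ)| = pE := by rw [sub_zero]; exact abs_of_nonneg hpE
  have h4 : |qF - a2| = qF - a2 := abs_of_nonneg (by omega)
  have h5 : |qE - a2| = a2 - qE := by rw [abs_sub_comm]; exact abs_of_nonneg (by omega)
  rw [h1, h2, h3, h4, h5]
  have hAB : p + |q - a2| ≤ (|p - pE| + |q - qE|) + 1 + (pF + (qF - a2)) := by
    have t1 := abs_sub_le q qE a2
    rw [h5] at t1
    have t2 := neg_abs_le (p - pE)
    have t3 := le_abs_self (p - pE)
    have t4 := abs_nonneg (q - qE)
    omega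
  have hAC : p + |q - a2| ≤ (|p - pF| + |q - qF|) + 1 + (pE + (a2 - qE)) := by
    have t1 := abs_sub_le q qF a2
    rw [h4] at t1
    have t2 := neg_abs_le (p - pF)
    have t3 := le_abs_self (p - pF)
    have t4 := abs_nonneg (q - qF)
    omega
  exact min_eq_left (le_min hAB hAC)

end StmtAux2

namespace StmtAux2

lemma quadAbs (y c1 c2 c3 : ℤ) (h12 : c1 ≤ c2) (h23 : c2 ≤ c3) :
    (y ≤ c1 ∧ |y-c1| = c1-y ∧ |y-c2| = c2-y ∧ |y-c3| = c3-y) ∨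
    (c1 ≤ y ∧ y ≤ c2 ∧ |y-c1| = y-c1 ∧ |y-c2| = c2-y ∧ |y-c3| = c3-y) ∨
    (c2 ≤ y ∧ y ≤ c3 ∧ |y-c1| = y-c1 ∧ |y-c2| = y-c2 ∧ |y-c3| = c3-y) ∨
    (c3 ≤ y ∧ |y-c1| = y-c1 ∧ |y-c2| = y-c2 ∧ |y-c3| = y-c3) := by
  have e1 : ∀ a b : ℤ, a ≤ b → |a - b| = b - a := fun a b h => by
    rw [abs_sub_comm]; exact abs_of_nonneg (by omega)
  have e2 : ∀ a b : ℤ, b ≤ a → |a - b| = a - b := fun a b h => abs_of_nonneg (by omega)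
  rcases le_total y c1 with h|h
  · exact Or.inl ⟨h, e1 _ _ h, e1 _ _ (by omega), e1 _ _ (by omega)⟩
  rcases le_total y c2 with h2|h2
  · exact Or.inr <| Or.inl ⟨h, h2, e2 _ _ h, e1 _ _ h2, e1 _ _ (by omega)⟩
  rcases le_total y c3 with h3|h3
  · exact Or.inr <| Or.inr <| Or.inl ⟨h2, h3, e2 _ _ h, e2 _ _ h2, e1 _ _ h3⟩
  · exact Or.inr <| Or.inr <| Or.inr ⟨h3, e2 _ _ h, e2 _ _ h2, e2 _ _ h3⟩

set_option maxHeartbeats 4000000 in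
lemma key (nn mm pE qE pF qF a2 b2 p q p' q' : ℤ)
    (hpE1 : 1 ≤ pE) (hpE2 : pE ≤ nn-2) (hpF1 : 1 ≤ pF) (hpF2 : pF ≤ nn-2)
    (hqE1 : 1 ≤ qE) (hqE2 : qE ≤ mm-2) (hqF1 : 1 ≤ qF) (hqF2 : qF ≤ mm-2)
    (hpEF : pF < pE) (hqEF : qE ≤ qF) (hsl : pE - pF ≤ qF - qE)
    (hg : 2 ≤ qF - qE - (pE - pF) - 1)
    (hless : 2*(pE-pF) < qF - qE - (pE - pF) + 3)
    (ha2 : 2*a2 = qF + qE + pF - pE - 1) (hb2 : 2*b2 = qF + qE + pE - pF - 1)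
    (hb2B : 0 ≤ b2) (hb2B2 : b2 ≤ mm - 1) (ha2B : 0 ≤ a2) (ha2B2 : a2 ≤ mm - 1)
    (hp : 0 ≤ p) (hp2 : p ≤ nn-1) (hq : 0 ≤ q) (hq2 : q ≤ mm-1)
    (hp' : 0 ≤ p') (hp'2 : p' ≤ nn-1) (hq' : 0 ≤ q') (hq'2 : q' ≤ mm-1)
    (hX : min (p + |q-b2|) ((|p - pE| + |q - qE|) + 1 + (pF + (qF - b2)))
        = min (p' + |q'-b2|) ((|p' - pE| + |q' - qE|) + 1 + (pF + (qF - b2))))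
    (hY : (nn-1-p) + |q-b2| = (nn-1-p') + |q'-b2|)
    (hZ : p + |q-a2| = p' + |q'-a2|) : p = p' ∧ q = q' := by
  have hqa : qE ≤ a2 := by omega
  have hab : a2 ≤ b2 := by omega
  rcases min_cases (p + |q-b2|) ((|p - pE| + |q - qE|) + 1 + (pF + (qF - b2))) with ⟨e1,le1⟩|⟨e1,le1⟩ <;>
  rcases min_cases (p' + |q'-b2|) ((|p' - pE| + |q' - qE|) + 1 + (pF + (qF - b2))) with ⟨e2,le2⟩|⟨e2,le2⟩ <;>
  rw [e1, e2] at hX <;>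
  rcases quadAbs q qE a2 b2 hqa hab with ⟨r1,a1,a2',a3⟩|⟨r1,r1b,a1,a2',a3⟩|⟨r1,r1b,a1,a2',a3⟩|⟨r1,a1,a2',a3⟩ <;>
  rcases quadAbs q' qE a2 b2 hqa hab with ⟨s1,b1',b2',b3⟩|⟨s1,s1b,b1',b2',b3⟩|⟨s1,s1b,b1',b2',b3⟩|⟨s1,b1',b2',b3⟩ <;>
  rcases abs_cases (p-pE) with ⟨c1,c2⟩|⟨c1,c2⟩ <;>
  rcases abs_cases (p'-pE) with ⟨d1,d2⟩|⟨d1,d2⟩ <;>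
  omega


end StmtAux2

/-- Lemma 6: under the symmetry-breaking and edge-case-removal assumptions, if
`Gain' = (y_F − y_E) − (x_E − x_F) − 1` is even and `x_E − x_F < Gain'/2 + 2`, then
with `α = (1 + y_F + y_E + x_F − x_E)/2` and `β = (1 + y_F + y_E + x_E − x_F)/2`,
the set `{X = (1, β − 1), Y = (n, β − 1), Z = (1, α − 1)}` is a resolving set
of `G'`. -/
theorem stmt_19 {m n : ℕ}
    (E F : Fin n × Fin m)
    (hdist : 2 ≤ (grid2 n m).dist E F)
    (h1 : Xc F ≤ Xc E) (h2 : Yc E ≤ Yc F)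
    (h3 : Xc E - Xc F ≤ Yc F - Yc E)
    (h4 : Xc F ≠ Xc E)
    (h5 : (2 : ℚ) ≤ (Yc F - Yc E) - (Xc E - Xc F) - 1)
    (h6 : ¬ onBoundary E) (h7 : ¬ onBoundary F)
    (heven : Even (((F.2 : ℕ) : ℤ) - ((E.2 : ℕ) : ℤ) - (((E.1 : ℕ) : ℤ) - ((F.1 : ℕ) : ℤ)) - 1))
    (hless : Xc E - Xc F < ((Yc F - Yc E) - (Xc E - Xc F) - 1) / 2 + 2)
    (G' : SimpleGraph (Fin n × Fin m))
    (hG' : G' = grid2 n m ⊔ SimpleGraph.fromEdgeSet {s(E, F)})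
    (X Y Z : Fin n × Fin m)
    (hX : Xc X = 1 ∧ Yc X = (1 + Yc F + Yc E + Xc E - Xc F) / 2 - 1)
    (hY : Xc Y = n ∧ Yc Y = (1 + Yc F + Yc E + Xc E - Xc F) / 2 - 1)
    (hZ : Xc Z = 1 ∧ Yc Z = (1 + Yc F + Yc E + Xc F - Xc E) / 2 - 1) :
    resolves G' {X, Y, Z} := by

  obtain ⟨hXx0, hXy0⟩ := hX
  obtain ⟨hYx0, hYy0⟩ := hY
  obtain ⟨hZx0, hZy0⟩ := hZ
  simp only [Xc, Yc] at hXx0 hXy0 hYx0 hYy0 hZx0 hZy0 h1 h2 h3 h4 h5 hless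
  unfold onBoundary at h6 h7
  push_neg at h6 h7
  obtain ⟨hE1, hE2, hE3, hE4⟩ := h6
  obtain ⟨hF1, hF2, hF3, hF4⟩ := h7
  have hEln := E.1.isLt; have hE2n := E.2.isLt
  have hFln := F.1.isLt; have hF2n := F.2.isLt
  -- E ≠ F
  have hEF : E ≠ F := by
    intro h
    rw [StmtAux.grid_dist, h, StmtAux.Dg_self] at hdist
    omega
  -- coordinates of landmarks, as integers
  have hXx : ((X.1 : ℕ) : ℤ) = 0 := by
    exact_mod_cast (by linarith : ((X.1:ℕ):ℚ) = 0)
  have hZx : ((Z.1 : ℕ) : ℤ) = 0 := by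
    exact_mod_cast (by linarith : ((Z.1:ℕ):ℚ) = 0)
  have hYx : ((Y.1 : ℕ) : ℤ) = (n:ℤ) - 1 := by
    exact_mod_cast (by linarith : ((Y.1:ℕ):ℚ) = (n:ℚ) - 1)
  have hYy : ((Y.2 : ℕ) : ℤ) = ((X.2 : ℕ) : ℤ) := by
    exact_mod_cast (by linarith : ((Y.2:ℕ):ℚ) = ((X.2:ℕ):ℚ))
  have hb2 : 2*((X.2:ℕ):ℤ) = ((F.2:ℕ):ℤ) + ((E.2:ℕ):ℤ) + ((E.1:ℕ):ℤ) - ((F.1:ℕ):ℤ) - 1 := by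
    exact_mod_cast (by linarith :
      (2:ℚ)*((X.2:ℕ):ℚ) = ((F.2:ℕ):ℚ) + ((E.2:ℕ):ℚ) + ((E.1:ℕ):ℚ) - ((F.1:ℕ):ℚ) - 1)
  have ha2 : 2*((Z.2:ℕ):ℤ) = ((F.2:ℕ):ℤ) + ((E.2:ℕ):ℤ) + ((F.1:ℕ):ℤ) - ((E.1:ℕ):ℤ) - 1 := by
    exact_mod_cast (by linarith :
      (2:ℚ)*((Z.2:ℕ):ℚ) = ((F.2:ℕ):ℚ) + ((E.2:ℕ):ℚ) + ((F.1:ℕ):ℚ) - ((E.1:ℕ):ℚ) - 1)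
  -- hypotheses as integer facts
  have hpEF : ((F.1:ℕ):ℤ) < ((E.1:ℕ):ℤ) := by
    have : ((F.1:ℕ):ℚ) < ((E.1:ℕ):ℚ) := lt_of_le_of_ne (by linarith) (fun hh => h4 (by rw [hh]))
    exact_mod_cast this
  have hqEF : ((E.2:ℕ):ℤ) ≤ ((F.2:ℕ):ℤ) := by
    have : ((E.2:ℕ):ℚ) ≤ ((F.2:ℕ):ℚ) := by linarith
    exact_mod_cast this
  have hsl : ((E.1:ℕ):ℤ) - ((F.1:ℕ):ℤ) ≤ ((F.2:ℕ):ℤ) - ((E.2:ℕ):ℤ) := by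
    have : ((E.1:ℕ):ℚ) - ((F.1:ℕ):ℚ) ≤ ((F.2:ℕ):ℚ) - ((E.2:ℕ):ℚ) := by linarith
    exact_mod_cast this
  have hg : (2:ℤ) ≤ ((F.2:ℕ):ℤ) - ((E.2:ℕ):ℤ) - (((E.1:ℕ):ℤ) - ((F.1:ℕ):ℤ)) - 1 := by
    have : (2:ℚ) ≤ ((F.2:ℕ):ℚ) - ((E.2:ℕ):ℚ) - (((E.1:ℕ):ℚ) - ((F.1:ℕ):ℚ)) - 1 := by linarith
    exact_mod_cast this
  have hls : 2*(((E.1:ℕ):ℤ) - ((F.1:ℕ):ℤ)) < ((F.2:ℕ):ℤ) - ((E.2:ℕ):ℤ) - (((E.1:ℕ):ℤ) - ((F.1:ℕ):ℤ)) + 3 := by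
    have : 2*(((E.1:ℕ):ℚ) - ((F.1:ℕ):ℚ)) < ((F.2:ℕ):ℚ) - ((E.2:ℕ):ℚ) - (((E.1:ℕ):ℚ) - ((F.1:ℕ):ℚ)) + 3 := by linarith
    exact_mod_cast this
  -- the resolving argument
  intro A B hAB
  by_contra hcon
  push_neg at hcon
  have hdX : G'.dist A X = G'.dist B X := hcon X (by simp)
  have hdY : G'.dist A Y = G'.dist B Y := hcon Y (by simp)
  have hdZ : G'.dist A Z = G'.dist B Z := hcon Z (by simp)
  rw [StmtAux.G'_dist E F hG' hEF A X, StmtAux.G'_dist E F hG' hEF B X] at hdX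
  rw [StmtAux.G'_dist E F hG' hEF A Y, StmtAux.G'_dist E F hG' hEF B Y] at hdY
  rw [StmtAux.G'_dist E F hG' hEF A Z, StmtAux.G'_dist E F hG' hEF B Z] at hdZ
  have hdXZ : ((StmtAux.D3 E F A X : ℕ) : ℤ) = ((StmtAux.D3 E F B X : ℕ) : ℤ) := by
    exact_mod_cast hdX
  have hdYZ : ((StmtAux.D3 E F A Y : ℕ) : ℤ) = ((StmtAux.D3 E F B Y : ℕ) : ℤ) := by
    exact_mod_cast hdY
  have hdZZ : ((StmtAux.D3 E F A Z : ℕ) : ℤ) = ((StmtAux.D3 E F B Z : ℕ) : ℤ) := by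
    exact_mod_cast hdZ
  rw [StmtAux.D3_cast, StmtAux.D3_cast] at hdXZ hdYZ hdZZ
  rw [hXx] at hdXZ
  rw [hYx, hYy] at hdYZ
  rw [hZx] at hdZZ
  have hAln := A.1.isLt; have hA2n := A.2.isLt
  have hBln := B.1.isLt; have hB2n := B.2.isLt
  have hX2n := X.2.isLt; have hZ2n := Z.2.isLt
  rw [StmtAux2.redX (n:ℤ) ((E.1:ℕ):ℤ) ((E.2:ℕ):ℤ) ((F.1:ℕ):ℤ) ((F.2:ℕ):ℤ) ((X.2:ℕ):ℤ) ((A.1:ℕ):ℤ) ((A.2:ℕ):ℤ)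
        hpEF hqEF hg hb2 (by positivity) (by positivity) (by positivity),
      StmtAux2.redX (n:ℤ) ((E.1:ℕ):ℤ) ((E.2:ℕ):ℤ) ((F.1:ℕ):ℤ) ((F.2:ℕ):ℤ) ((X.2:ℕ):ℤ) ((B.1:ℕ):ℤ) ((B.2:ℕ):ℤ)
        hpEF hqEF hg hb2 (by positivity) (by positivity) (by positivity)] at hdXZ
  rw [StmtAux2.redY (n:ℤ) ((E.1:ℕ):ℤ) ((E.2:ℕ):ℤ) ((F.1:ℕ):ℤ) ((F.2:ℕ):ℤ) ((X.2:ℕ):ℤ) ((A.1:ℕ):ℤ) ((A.2:ℕ):ℤ)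
        hpEF hqEF hg hb2 (by omega) (by omega) (by omega),
      StmtAux2.redY (n:ℤ) ((E.1:ℕ):ℤ) ((E.2:ℕ):ℤ) ((F.1:ℕ):ℤ) ((F.2:ℕ):ℤ) ((X.2:ℕ):ℤ) ((B.1:ℕ):ℤ) ((B.2:ℕ):ℤ)
        hpEF hqEF hg hb2 (by omega) (by omega) (by omega)] at hdYZ
  rw [StmtAux2.redZ (n:ℤ) ((E.1:ℕ):ℤ) ((E.2:ℕ):ℤ) ((F.1:ℕ):ℤ) ((F.2:ℕ):ℤ) ((Z.2:ℕ):ℤ) ((A.1:ℕ):ℤ) ((A.2:ℕ):ℤ)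
        hpEF hqEF hg ha2 (by positivity) (by positivity) (by positivity),
      StmtAux2.redZ (n:ℤ) ((E.1:ℕ):ℤ) ((E.2:ℕ):ℤ) ((F.1:ℕ):ℤ) ((F.2:ℕ):ℤ) ((Z.2:ℕ):ℤ) ((B.1:ℕ):ℤ) ((B.2:ℕ):ℤ)
        hpEF hqEF hg ha2 (by positivity) (by positivity) (by positivity)] at hdZZ
  obtain ⟨hpp, hqq⟩ := StmtAux2.key (n:ℤ) (m:ℤ) ((E.1:ℕ):ℤ) ((E.2:ℕ):ℤ) ((F.1:ℕ):ℤ) ((F.2:ℕ):ℤ)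
    ((Z.2:ℕ):ℤ) ((X.2:ℕ):ℤ) ((A.1:ℕ):ℤ) ((A.2:ℕ):ℤ) ((B.1:ℕ):ℤ) ((B.2:ℕ):ℤ)
    (by omega) (by omega) (by omega) (by omega)
    (by omega) (by omega) (by omega) (by omega)
    hpEF hqEF hsl hg (by omega) ha2 hb2
    (by omega) (by omega) (by omega) (by omega)
    (by omega) (by omega) (by omega) (by omega)
    (by omega) (by omega) (by omega) (by omega)
    hdXZ hdYZ hdZZ
  exact hAB (Prod.ext (Fin.ext (by exact_mod_cast hpp)) (Fin.ext (by exact_mod_cast hqq)))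
end
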